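/- arXiv:1505.04140 — 8 statements merged into one kernel-verified Lean document; each statement's English description precedes it below -/
import Mathlib

section
/- Row orthogonality of the finite-field cas carriers: for all k, l ∈ ZMod N, the sum Σ_{i ∈ ZMod N} cas_k(i) · cas_l(i) equals (N : F) (the image of N in F) if k = l, and equals 0 if k ≠ l. -/
/-- The finite-field `cas` (cos-and-sin) carrier function over a field `F`:
`cas_k(i) = ((1 - j)·ζ^{ki} + (1 + j)·ζ^{-ki})/2`, where the exponents are taken
through representatives of `k·i` in `ZMod N`. -/
def cas {F : Type*} [Field F] {N : ℕ} (j ζ : F) (k i : ZMod N) : F :=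
  ((1 - j) * ζ ^ (k * i).val + (1 + j) * ζ ^ (-(k * i)).val) / 2

lemma cas_epow {F : Type*} [Field F] {N : ℕ} [NeZero N] {ζ : F} (hζ : orderOf ζ = N)
    (x y : ZMod N) : ζ ^ (x + y).val = ζ ^ x.val * ζ ^ y.val := by
  rw [ZMod.val_add, ← pow_add]
  have h := pow_mod_orderOf ζ (x.val + y.val)
  rw [hζ] at h
  exact h

lemma cas_esum {F : Type*} [Field F] {N : ℕ} [NeZero N] {ζ : F} (hζ : orderOf ζ = N)
    (m : ZMod N) : ∑ i : ZMod N, ζ ^ (m * i).val = if m = 0 then (N : F) else 0 := by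
  split_ifs with hm
  · subst hm
    simp [ZMod.val_zero, ZMod.card]
  · have hm1 : ζ ^ m.val ≠ 1 := by
      intro h1
      apply hm
      have hd := orderOf_dvd_of_pow_eq_one h1
      rw [hζ] at hd
      have h0 : m.val = 0 := Nat.eq_zero_of_dvd_of_lt hd (ZMod.val_lt m)
      exact (ZMod.val_eq_zero m).mp h0
    have hS : ζ ^ m.val * (∑ i : ZMod N, ζ ^ (m * i).val) = ∑ i : ZMod N, ζ ^ (m * i).val := by
      rw [Finset.mul_sum]
      calc ∑ i : ZMod N, ζ ^ m.val * ζ ^ (m * i).val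
          = ∑ i : ZMod N, ζ ^ (m * (i + 1)).val := by
            refine Finset.sum_congr rfl fun i _ => ?_
            rw [mul_add, mul_one, cas_epow hζ, mul_comm]
        _ = ∑ i : ZMod N, ζ ^ (m * i).val :=
            Fintype.sum_equiv (Equiv.addRight 1) _ _ (fun i => rfl)
    have := sub_eq_zero.mpr hS
    rw [← sub_one_mul] at this
    rcases mul_eq_zero.mp this with h | h
    · exact absurd (sub_eq_zero.mp h) hm1
    · exact h

/-- Row orthogonality of the finite-field cas carriers. -/
theorem cas_row_orthogonality {F : Type*} [Field F] (N : ℕ) [NeZero N]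
    (j ζ : F) (h2 : IsUnit (2 : F)) (hj : j ^ 2 = -1) (hζ : orderOf ζ = N)
    (k l : ZMod N) :
    ∑ i : ZMod N, cas j ζ k i * cas j ζ l i = if k = l then (N : F) else 0 := by
  have h2' : (2 : F) ≠ 0 := h2.ne_zero
  have h4' : (4 : F) ≠ 0 := by
    have := mul_ne_zero h2' h2'
    norm_num at this ⊢
    exact this
  have key : ∀ i : ZMod N, cas j ζ k i * cas j ζ l i
      = (-(2 * j) * ζ ^ ((k + l) * i).val + 2 * ζ ^ ((k - l) * i).val
          + 2 * ζ ^ ((l - k) * i).val + (2 * j) * ζ ^ ((-(k + l)) * i).val) / 4 := by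
    intro i
    have e1 : ζ ^ ((k + l) * i).val = ζ ^ (k * i).val * ζ ^ (l * i).val := by
      rw [add_mul, cas_epow hζ]
    have e2 : ζ ^ ((k - l) * i).val = ζ ^ (k * i).val * ζ ^ (-(l * i)).val := by
      rw [sub_mul, sub_eq_add_neg, cas_epow hζ]
    have e3 : ζ ^ ((l - k) * i).val = ζ ^ (l * i).val * ζ ^ (-(k * i)).val := by
      rw [sub_mul, sub_eq_add_neg, cas_epow hζ]
    have e4 : ζ ^ ((-(k + l)) * i).val = ζ ^ (-(k * i)).val * ζ ^ (-(l * i)).val := by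
      rw [neg_mul, add_mul, neg_add, cas_epow hζ]
    simp only [cas]
    rw [e1, e2, e3, e4]
    set A := ζ ^ (k * i).val
    set A' := ζ ^ (-(k * i)).val
    set B := ζ ^ (l * i).val
    set B' := ζ ^ (-(l * i)).val
    field_simp
    linear_combination 4 * (A * B - A * B' - A' * B + A' * B') * hj
  rw [Finset.sum_congr rfl fun i _ => key i, ← Finset.sum_div]
  rw [Finset.sum_add_distrib, Finset.sum_add_distrib, Finset.sum_add_distrib,
    ← Finset.mul_sum, ← Finset.mul_sum, ← Finset.mul_sum, ← Finset.mul_sum,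
    cas_esum hζ, cas_esum hζ, cas_esum hζ, cas_esum hζ]
  simp only [sub_eq_zero, neg_eq_zero]
  have hflip : (if l = k then (N : F) else 0) = if k = l then (N : F) else 0 := by
    by_cases h : k = l <;> simp [h, eq_comm]
  rw [hflip]
  split_ifs <;> field_simp <;> ring
end

section
/- Column orthogonality of the finite-field cas carriers: for all i, i' ∈ ZMod N, the sum Σ_{k ∈ ZMod N} cas_k(i) · cas_k(i') equals (N : F) (the image of N in F) if i = i', and equals 0 if i ≠ i'. -/
lemma hmodpow {F : Type*} [Field F] {N : ℕ} {ζ : F} (hN1 : ζ ^ N = 1) (x : ℕ) :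
    ζ ^ x = ζ ^ (x % N) := by
  conv_lhs => rw [← Nat.div_add_mod x N]
  rw [pow_add, pow_mul, hN1, one_pow, one_mul]

lemma epow {F : Type*} [Field F] {N : ℕ} [NeZero N] {ζ : F} (hζ : orderOf ζ = N)
    (a b : ZMod N) : ζ ^ ((a + b).val) = ζ ^ a.val * ζ ^ b.val := by
  have hN1 : ζ ^ N = 1 := hζ ▸ pow_orderOf_eq_one ζ
  rw [← pow_add, ZMod.val_add, ← hmodpow hN1]

lemma sumS {F : Type*} [Field F] {N : ℕ} [NeZero N] {ζ : F} (hζ : orderOf ζ = N)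
    (m : ZMod N) : ∑ k : ZMod N, ζ ^ (k * m).val = if m = 0 then (N : F) else 0 := by
  have hN1 : ζ ^ N = 1 := hζ ▸ pow_orderOf_eq_one ζ
  have hterm : ∀ k : ZMod N, ζ ^ (k * m).val = (ζ ^ m.val) ^ k.val := by
    intro k
    calc ζ ^ (k * m).val = ζ ^ ((k.val * m.val) % N) := by rw [ZMod.val_mul]
      _ = ζ ^ (k.val * m.val) := (hmodpow hN1 _).symm
      _ = (ζ ^ m.val) ^ k.val := by rw [mul_comm, pow_mul]
  simp only [hterm]
  have hrange : ∑ k : ZMod N, (ζ ^ m.val) ^ k.val = ∑ n ∈ Finset.range N, (ζ ^ m.val) ^ n := by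
    refine Finset.sum_nbij' (fun k => ZMod.val k) (fun n => (n : ZMod N)) ?_ ?_ ?_ ?_ ?_ <;>
      simp [ZMod.val_lt, ZMod.val_cast_of_lt, ZMod.val_natCast, Finset.mem_range]
    intro a ha
    exact Nat.mod_eq_of_lt ha
  rw [hrange]
  by_cases hm : m = 0
  · simp [hm]
  · have hne : ζ ^ m.val ≠ 1 := by
      intro h
      have hdvd := orderOf_dvd_of_pow_eq_one h
      rw [hζ] at hdvd
      have hlt := ZMod.val_lt m
      have hpos : 0 < m.val := by
        rcases Nat.eq_zero_or_pos m.val with h0 | h0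
        · exact absurd ((ZMod.val_eq_zero m).mp h0) hm
        · exact h0
      exact absurd (Nat.le_of_dvd hpos hdvd) (by omega)
    rw [if_neg hm, geom_sum_eq hne, ← pow_mul, mul_comm, pow_mul, hN1, one_pow]
    simp


/-- Column orthogonality of the finite-field cas carriers. -/
theorem cas_column_orthogonality {F : Type*} [Field F] (N : ℕ) [NeZero N]
    (j ζ : F) (h2 : IsUnit (2 : F)) (hj : j ^ 2 = -1) (hζ : orderOf ζ = N)
    (i i' : ZMod N) :
    ∑ k : ZMod N, cas j ζ k i * cas j ζ k i' = if i = i' then (N : F) else 0 := by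
  have h2ne : (2 : F) ≠ 0 := h2.ne_zero
  have h4ne : (4 : F) ≠ 0 := by
    have h : (4 : F) = 2 * 2 := by norm_num
    rw [h]; exact mul_ne_zero h2ne h2ne
  have hk : ∀ k : ZMod N, cas j ζ k i * cas j ζ k i' =
      (-(2*j) * ζ ^ (k*(i+i')).val + (2*j) * ζ ^ (k*(-(i+i'))).val
        + 2 * ζ ^ (k*(i-i')).val + 2 * ζ ^ (k*(i'-i)).val) / 4 := by
    intro k
    have e1 : k*(i+i') = k*i + k*i' := by ring
    have e2 : k*(-(i+i')) = -(k*i) + -(k*i') := by ring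
    have e3 : k*(i-i') = k*i + -(k*i') := by ring
    have e4 : k*(i'-i) = -(k*i) + k*i' := by ring
    rw [e1, e2, e3, e4, epow hζ, epow hζ, epow hζ, epow hζ]
    unfold cas
    set a := ζ ^ (k*i).val
    set b := ζ ^ (-(k*i)).val
    set c := ζ ^ (k*i').val
    set d := ζ ^ (-(k*i')).val
    field_simp
    linear_combination 4*(a*c - a*d - b*c + b*d) * hj
  rw [Finset.sum_congr rfl (fun k _ => hk k)]
  simp only [← Finset.sum_div, Finset.sum_add_distrib, ← Finset.mul_sum]
  rw [sumS hζ (i+i'), sumS hζ (-(i+i')), sumS hζ (i-i'), sumS hζ (i'-i)]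
  simp only [neg_eq_zero, sub_eq_zero]
  by_cases hii : i = i' <;> by_cases hs : i + i' = 0 <;>
    simp [hii, hs, eq_comm] <;> field_simp <;> split_ifs <;> ring
end

section
/- The finite-field Hartley transform is self-inverse up to the factor N (so the demultiplexer is the same transform as the multiplexer): if (N : F) is invertible in F and V is the FFHT of v, then for every i ∈ ZMod N one has v_i = (N : F)⁻¹ · Σ_{k ∈ ZMod N} V_k · cas_k(i). -/
lemma pow_val_add {F : Type*} [Field F] {N : ℕ} [NeZero N] {ζ : F}
    (hζ : orderOf ζ = N) (a b : ZMod N) :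
    ζ ^ a.val * ζ ^ b.val = ζ ^ (a + b).val := by
  have hζN : ζ ^ N = 1 := hζ ▸ pow_orderOf_eq_one ζ
  rw [← pow_add, ZMod.val_add, ← pow_eq_pow_mod _ hζN]

lemma sum_pow_val {F : Type*} [Field F] {N : ℕ} [NeZero N] {ζ : F}
    (hζ : orderOf ζ = N) (t : ZMod N) :
    ∑ k : ZMod N, ζ ^ (k * t).val = if t = 0 then (N : F) else 0 := by
  have hrw : ∀ k : ZMod N, ζ ^ (k * t).val = (ζ ^ t.val) ^ k.val := by
    intro k
    have hζN : ζ ^ N = 1 := hζ ▸ pow_orderOf_eq_one ζ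
    rw [ZMod.val_mul, ← pow_eq_pow_mod _ hζN, mul_comm, pow_mul]
  simp only [hrw]
  have hsum : ∑ k : ZMod N, (ζ ^ t.val) ^ k.val
      = ∑ n ∈ Finset.range N, (ζ ^ t.val) ^ n := by
    refine Finset.sum_nbij' (fun k => k.val) (fun n => (n : ZMod N))
      (fun k _ => Finset.mem_range.mpr (ZMod.val_lt k))
      (fun n _ => Finset.mem_univ _)
      (fun k _ => ZMod.natCast_rightInverse k)
      (fun n hn => ZMod.val_natCast_of_lt (Finset.mem_range.mp hn))
      (fun k _ => rfl)
  rw [hsum]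
  by_cases ht : t = 0
  · simp [ht, ZMod.val_zero]
  · have hv : t.val ≠ 0 := fun h0 => ht ((ZMod.val_eq_zero t).mp h0)
    have hne : ζ ^ t.val ≠ 1 := by
      intro h
      have hdvd := orderOf_dvd_of_pow_eq_one h
      rw [hζ] at hdvd
      exact absurd (Nat.le_of_dvd (Nat.pos_of_ne_zero hv) hdvd)
        (not_le.mpr (ZMod.val_lt t))
    rw [geom_sum_eq hne, if_neg ht]
    have hζN : ζ ^ N = 1 := hζ ▸ pow_orderOf_eq_one ζ
    have hN1 : (ζ ^ t.val) ^ N = 1 := by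
      rw [← pow_mul, mul_comm, pow_mul, hζN, one_pow]
    rw [hN1, sub_self, zero_div]

lemma cas_orth {F : Type*} [Field F] {N : ℕ} [NeZero N]
    (j ζ : F) (h2 : IsUnit (2 : F)) (hj : j ^ 2 = -1) (hζ : orderOf ζ = N)
    (m i : ZMod N) :
    ∑ k : ZMod N, cas j ζ k m * cas j ζ k i = if m = i then (N : F) else 0 := by
  have h2' : (2 : F) ≠ 0 := h2.ne_zero
  have h4 : (4 : F) ≠ 0 := by
    have h : (4 : F) = 2 * 2 := by norm_num
    rw [h]; exact mul_ne_zero h2' h2'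
  have expand : ∀ k : ZMod N, cas j ζ k m * cas j ζ k i =
      (-(2 * j) * ζ ^ (k * (m + i)).val + 2 * ζ ^ (k * (m - i)).val
        + 2 * ζ ^ (k * (i - m)).val + (2 * j) * ζ ^ (k * (-(m + i))).val) / 4 := by
    intro k
    unfold cas
    have hab : ζ ^ (k * m).val * ζ ^ (k * i).val = ζ ^ (k * (m + i)).val := by
      rw [pow_val_add hζ, mul_add]
    have hab' : ζ ^ (k * m).val * ζ ^ (-(k * i)).val = ζ ^ (k * (m - i)).val := by
      rw [pow_val_add hζ]
      congr 1
      ring_nf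
    have ha'b : ζ ^ (-(k * m)).val * ζ ^ (k * i).val = ζ ^ (k * (i - m)).val := by
      rw [pow_val_add hζ]
      congr 1
      ring_nf
    have ha'b' : ζ ^ (-(k * m)).val * ζ ^ (-(k * i)).val = ζ ^ (k * (-(m + i))).val := by
      rw [pow_val_add hζ]
      congr 1
      ring_nf
    rw [← hab, ← hab', ← ha'b, ← ha'b']
    set a := ζ ^ (k * m).val
    set a' := ζ ^ (-(k * m)).val
    set b := ζ ^ (k * i).val
    set b' := ζ ^ (-(k * i)).val
    field_simp
    ring_nf
    linear_combination (4 * (a - a') * (b - b')) * hj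
  calc ∑ k : ZMod N, cas j ζ k m * cas j ζ k i
      = ∑ k : ZMod N, (-(2 * j) * ζ ^ (k * (m + i)).val + 2 * ζ ^ (k * (m - i)).val
        + 2 * ζ ^ (k * (i - m)).val + (2 * j) * ζ ^ (k * (-(m + i))).val) / 4 := by
        exact Finset.sum_congr rfl fun k _ => expand k
    _ = (-(2 * j) * ∑ k : ZMod N, ζ ^ (k * (m + i)).val
        + 2 * ∑ k : ZMod N, ζ ^ (k * (m - i)).val
        + 2 * ∑ k : ZMod N, ζ ^ (k * (i - m)).val
        + (2 * j) * ∑ k : ZMod N, ζ ^ (k * (-(m + i))).val) / 4 := by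
        rw [← Finset.sum_div]
        congr 1
        simp only [Finset.sum_add_distrib, Finset.mul_sum]
    _ = if m = i then (N : F) else 0 := by
        rw [sum_pow_val hζ, sum_pow_val hζ, sum_pow_val hζ, sum_pow_val hζ]
        have hneg : ((-(m + i) : ZMod N) = 0) ↔ ((m + i : ZMod N) = 0) := neg_eq_zero
        by_cases hmi : m = i
        · subst hmi
          rw [if_pos rfl, sub_self, if_pos rfl]
          by_cases hz : (m + m : ZMod N) = 0
          · rw [if_pos hz, if_pos (hneg.mpr hz)]
            field_simp
            ring
          · rw [if_neg hz, if_neg (fun h => hz (hneg.mp h))]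
            field_simp
            ring
        · rw [if_neg hmi, if_neg (fun h => hmi (sub_eq_zero.mp h)),
            if_neg (fun h : i - m = 0 => hmi (sub_eq_zero.mp h).symm)]
          by_cases hz : (m + i : ZMod N) = 0
          · rw [if_pos hz, if_pos (hneg.mpr hz)]
            ring
          · rw [if_neg hz, if_neg (fun h => hz (hneg.mp h))]
            ring

/-- The finite-field Hartley transform is self-inverse up to the factor `N`:
if `V` is the FFHT of `v` and `(N : F)` is invertible, then
`v i = (N : F)⁻¹ · Σ_k V k · cas_k(i)`. -/
theorem ffht_self_inverse {F : Type*} [Field F] (N : ℕ) [NeZero N]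
    (j ζ : F) (h2 : IsUnit (2 : F)) (hj : j ^ 2 = -1) (hζ : orderOf ζ = N)
    (hN : IsUnit (N : F)) (v V : ZMod N → F)
    (hV : ∀ k : ZMod N, V k = ∑ i : ZMod N, v i * cas j ζ k i)
    (i : ZMod N) :
    v i = (N : F)⁻¹ * ∑ k : ZMod N, V k * cas j ζ k i := by
  have hNne : (N : F) ≠ 0 := hN.ne_zero
  have key : ∑ k : ZMod N, V k * cas j ζ k i = v i * N := by
    calc ∑ k : ZMod N, V k * cas j ζ k i
        = ∑ k : ZMod N, ∑ m : ZMod N, v m * (cas j ζ k m * cas j ζ k i) := by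
          refine Finset.sum_congr rfl fun k _ => ?_
          rw [hV k, Finset.sum_mul]
          exact Finset.sum_congr rfl fun m _ => by ring
      _ = ∑ m : ZMod N, ∑ k : ZMod N, v m * (cas j ζ k m * cas j ζ k i) :=
          Finset.sum_comm
      _ = ∑ m : ZMod N, v m * (if m = i then (N : F) else 0) := by
          refine Finset.sum_congr rfl fun m _ => ?_
          rw [← Finset.mul_sum, cas_orth j ζ h2 hj hζ m i]
      _ = v i * N := by
          simp only [mul_ite, mul_zero]
          rw [Finset.sum_ite_eq' Finset.univ i (fun m => v m * (N : F))]
          simp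
  rw [key]
  field_simp
end

section
/- Parseval identity for the finite-field Hartley transform (the carriers all have the same energy and the transform preserves correlations up to the factor N): if V and W are the FFHTs of v and w respectively, then Σ_{k ∈ ZMod N} V_k · W_k = (N : F) · Σ_{i ∈ ZMod N} v_i · w_i. -/
namespace FfhtAux

variable {F : Type*} [Field F] {N : ℕ} [NeZero N]

/-- auxiliary exponential -/
def e (ζ : F) (x : ZMod N) : F := ζ ^ x.val

lemma e_zero (ζ : F) : e ζ (0 : ZMod N) = 1 := by simp [e]

lemma e_add {ζ : F} (hζ : orderOf ζ = N) (x y : ZMod N) :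
    e ζ (x + y) = e ζ x * e ζ y := by
  rw [e, e, e, ← pow_add, ZMod.val_add]
  conv_rhs => rw [← pow_mod_orderOf, hζ]

lemma e_nsmul {ζ : F} (hζ : orderOf ζ = N) (n : ℕ) (a : ZMod N) :
    e ζ (n • a) = (e ζ a) ^ n := by
  induction n with
  | zero => simp [e_zero]
  | succ n ih => rw [succ_nsmul, e_add hζ, ih, pow_succ]

lemma sum_e {ζ : F} (hζ : orderOf ζ = N) (a : ZMod N) :
    ∑ k : ZMod N, e ζ (k * a) = if a = 0 then (N : F) else 0 := by
  split_ifs with h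
  · simp [h, e_zero, ZMod.card]
  · have hkey : ∀ k : ZMod N, e ζ (k * a) = (e ζ a) ^ k.val := by
      intro k
      rw [← e_nsmul hζ, nsmul_eq_mul, ZMod.natCast_rightInverse k]
    simp only [hkey]
    have hrange : ∑ k : ZMod N, (e ζ a) ^ k.val = ∑ m ∈ Finset.range N, (e ζ a) ^ m := by
      refine Finset.sum_nbij' (fun k : ZMod N => k.val) (fun m : ℕ => (m : ZMod N))
        ?_ ?_ ?_ ?_ ?_
      · simp [ZMod.val_lt]
      · simp
      · intro k _; exact ZMod.natCast_rightInverse k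
      · intro m hm
        exact ZMod.val_cast_of_lt (Finset.mem_range.mp hm)
      · intro k _; rfl
    have hne : e ζ a ≠ 1 := by
      intro h1
      have := orderOf_dvd_of_pow_eq_one h1
      rw [hζ] at this
      have hlt : a.val < N := ZMod.val_lt a
      have hpos : 0 < a.val := Nat.pos_of_ne_zero (fun h0 => h ((ZMod.val_eq_zero a).mp h0))
      exact absurd (Nat.le_of_dvd hpos this) (not_le.mpr hlt)
    have hN : (e ζ a) ^ N = 1 := by
      rw [← e_nsmul hζ, nsmul_eq_mul, ZMod.natCast_self, zero_mul, e_zero]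
    rw [hrange, geom_sum_eq hne, hN, sub_self, zero_div]

lemma cas_eq (j ζ : F) (k i : ZMod N) :
    cas j ζ k i = ((1 - j) * e ζ (k * i) + (1 + j) * e ζ (-(k * i))) / 2 := rfl

lemma sum_cas_mul {j ζ : F} (h2 : IsUnit (2 : F)) (hj : j ^ 2 = -1)
    (hζ : orderOf ζ = N) (i i' : ZMod N) :
    ∑ k : ZMod N, cas j ζ k i * cas j ζ k i' = if i = i' then (N : F) else 0 := by
  have h2' : (2 : F) ≠ 0 := h2.ne_zero
  have h4 : (4 : F) ≠ 0 := by
    intro h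
    apply h2'
    have : (4 : F) = 2 * 2 := by norm_num
    rw [this] at h
    exact (mul_self_eq_zero).mp h
  have key : ∀ k : ZMod N, cas j ζ k i * cas j ζ k i' =
      ((1 - j) ^ 2 * e ζ (k * (i + i')) + (1 + j) ^ 2 * e ζ (k * (-(i + i')))
        + 2 * e ζ (k * (i - i')) + 2 * e ζ (k * (i' - i))) / 4 := by
    intro k
    have e1 : e ζ (k * i) * e ζ (k * i') = e ζ (k * (i + i')) := by
      rw [← e_add hζ, mul_add]
    have e2 : e ζ (k * i) * e ζ (-(k * i')) = e ζ (k * (i - i')) := by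
      rw [← e_add hζ]; congr 1; ring
    have e3 : e ζ (-(k * i)) * e ζ (k * i') = e ζ (k * (i' - i)) := by
      rw [← e_add hζ]; congr 1; ring
    have e4 : e ζ (-(k * i)) * e ζ (-(k * i')) = e ζ (k * (-(i + i'))) := by
      rw [← e_add hζ]; congr 1; ring
    have hjj : (1 - j) * (1 + j) = 2 := by
      have h' : (1 - j) * (1 + j) = 1 - j ^ 2 := by ring
      rw [h', hj]; ring
    rw [cas_eq, cas_eq]
    calc ((1 - j) * e ζ (k * i) + (1 + j) * e ζ (-(k * i))) / 2 *
        (((1 - j) * e ζ (k * i') + (1 + j) * e ζ (-(k * i'))) / 2)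
        = ((1 - j) ^ 2 * (e ζ (k * i) * e ζ (k * i'))
            + (1 + j) ^ 2 * (e ζ (-(k * i)) * e ζ (-(k * i')))
            + ((1 - j) * (1 + j)) * (e ζ (k * i) * e ζ (-(k * i')))
            + ((1 - j) * (1 + j)) * (e ζ (-(k * i)) * e ζ (k * i'))) / 4 := by
          field_simp
          ring
      _ = _ := by rw [e1, e2, e3, e4, hjj]
  simp only [key]
  rw [← Finset.sum_div, Finset.sum_add_distrib, Finset.sum_add_distrib,
    Finset.sum_add_distrib, ← Finset.mul_sum, ← Finset.mul_sum, ← Finset.mul_sum,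
    ← Finset.mul_sum, sum_e hζ, sum_e hζ, sum_e hζ, sum_e hζ]
  by_cases hii : i = i'
  · subst hii
    by_cases hs : i + i = 0
    · simp only [hs, neg_zero, sub_self, if_true]
      field_simp
      linear_combination 2 * (N : F) * hj
    · simp only [hs, if_false, neg_eq_zero, sub_self, if_true]
      field_simp
      ring
  · have h1 : i - i' ≠ 0 := sub_ne_zero.mpr hii
    have h2'' : i' - i ≠ 0 := sub_ne_zero.mpr (Ne.symm hii)
    simp only [h1, h2'', if_false, if_neg hii, mul_zero, add_zero]
    by_cases hs : i + i' = 0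
    · simp only [hs, neg_zero, if_true]
      field_simp
      linear_combination 2 * (N : F) * hj
    · simp only [hs, if_false, neg_eq_zero, mul_zero, add_zero, zero_div]

end FfhtAux

open FfhtAux in
/-- Parseval identity for the finite-field Hartley transform: if `V`, `W` are the
FFHTs of `v`, `w`, then `Σ_k V k · W k = (N : F) · Σ_i v i · w i`. -/
theorem ffht_parseval {F : Type*} [Field F] (N : ℕ) [NeZero N]
    (j ζ : F) (h2 : IsUnit (2 : F)) (hj : j ^ 2 = -1) (hζ : orderOf ζ = N)
    (v w V W : ZMod N → F)
    (hV : ∀ k : ZMod N, V k = ∑ i : ZMod N, v i * cas j ζ k i)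
    (hW : ∀ k : ZMod N, W k = ∑ i : ZMod N, w i * cas j ζ k i) :
    ∑ k : ZMod N, V k * W k = (N : F) * ∑ i : ZMod N, v i * w i := by
  calc ∑ k : ZMod N, V k * W k
      = ∑ k : ZMod N, ∑ i : ZMod N, ∑ i' : ZMod N,
          v i * w i' * (cas j ζ k i * cas j ζ k i') := by
        simp only [hV, hW, Finset.sum_mul_sum]
        exact Finset.sum_congr rfl fun k _ => Finset.sum_congr rfl fun i _ =>
          Finset.sum_congr rfl fun i' _ => by ring
    _ = ∑ i : ZMod N, ∑ i' : ZMod N,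
          v i * w i' * ∑ k : ZMod N, cas j ζ k i * cas j ζ k i' := by
        rw [Finset.sum_comm]
        refine Finset.sum_congr rfl fun i _ => ?_
        rw [Finset.sum_comm]
        refine Finset.sum_congr rfl fun i' _ => ?_
        rw [← Finset.mul_sum]
    _ = ∑ i : ZMod N, ∑ i' : ZMod N, v i * w i' * (if i = i' then (N : F) else 0) := by
        simp only [sum_cas_mul h2 hj hζ]
    _ = (N : F) * ∑ i : ZMod N, v i * w i := by
        rw [Finset.mul_sum]
        refine Finset.sum_congr rfl fun i _ => ?_
        simp only [mul_ite, mul_zero, Finset.sum_ite_eq, Finset.mem_univ, if_true]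
        ring
end

section
/- Frobenius conjugacy symmetry of the finite-field Hartley transform: assume F has characteristic p (p an odd prime), assume j^p = −j, and let v : ZMod N → F satisfy v_i^p = v_i for all i (i.e., v takes values in the prime field GF(p)). If V is the FFHT of v, then for every k ∈ ZMod N one has (V_k)^p = V_{−p·k}, where −p·k is computed in ZMod N. -/
lemma pow_val_mul' {F : Type*} [Field F] {N : ℕ} [NeZero N] (ζ : F) (hζ : orderOf ζ = N)
    (p : ℕ) (a : ZMod N) : (ζ ^ a.val) ^ p = ζ ^ ((p : ZMod N) * a).val := by
  rw [← pow_mul, ← pow_mod_orderOf ζ (a.val * p), ← pow_mod_orderOf ζ ((p : ZMod N) * a).val, hζ,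
    ZMod.val_mul, ZMod.val_natCast, Nat.mod_mod_of_dvd _ dvd_rfl, Nat.mod_mul_mod, mul_comm]

lemma cas_pow' {F : Type*} [Field F] (p N : ℕ) [Fact p.Prime] [CharP F p] [NeZero N]
    (j ζ : F) (hjp : j ^ p = -j) (hζ : orderOf ζ = N) (k i : ZMod N) :
    cas j ζ k i ^ p = cas j ζ (-((p : ZMod N) * k)) i := by
  have h1 : (1 - j) ^ p = 1 + j := by rw [sub_pow_char, one_pow, hjp, sub_neg_eq_add]
  have h2 : (1 + j) ^ p = 1 - j := by rw [add_pow_char, one_pow, hjp, ← sub_eq_add_neg]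
  have h2p : (2 : F) ^ p = 2 := by
    rw [show (2 : F) = 1 + 1 by norm_num, add_pow_char, one_pow]
  have e1 : ((p : ZMod N) * (k * i)) = -(-((p : ZMod N) * k) * i) := by ring
  have e2 : ((p : ZMod N) * -(k * i)) = -((p : ZMod N) * k) * i := by ring
  unfold cas
  rw [div_pow, add_pow_char, mul_pow, mul_pow, h1, h2, h2p,
    pow_val_mul' ζ hζ p (k * i), pow_val_mul' ζ hζ p (-(k * i)), e1, e2, add_comm]

/-- Frobenius conjugacy symmetry of the finite-field Hartley transform:
in characteristic `p` (odd prime), with `j^p = -j`, if `v` takes values in the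
prime field (`v i ^ p = v i`) and `V` is the FFHT of `v`, then
`(V k)^p = V (-p·k)`. -/
theorem ffht_frobenius_symmetry {F : Type*} [Field F] (p N : ℕ) [Fact p.Prime]
    (hodd : Odd p) [CharP F p] [NeZero N]
    (j ζ : F) (h2 : IsUnit (2 : F)) (hj : j ^ 2 = -1) (hjp : j ^ p = -j)
    (hζ : orderOf ζ = N) (v V : ZMod N → F)
    (hv : ∀ i : ZMod N, v i ^ p = v i)
    (hV : ∀ k : ZMod N, V k = ∑ i : ZMod N, v i * cas j ζ k i)
    (k : ZMod N) :
    (V k) ^ p = V (-((p : ZMod N) * k)) := by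
  rw [hV k, hV]
  calc (∑ i : ZMod N, v i * cas j ζ k i) ^ p
      = ∑ i : ZMod N, (v i * cas j ζ k i) ^ p := by
        have h := map_sum (frobenius F p) (fun i => v i * cas j ζ k i) Finset.univ
        simp only [frobenius_def] at h
        exact h
    _ = ∑ i : ZMod N, v i * cas j ζ (-((p : ZMod N) * k)) i := by
        refine Finset.sum_congr rfl fun i _ => ?_
        rw [mul_pow, hv, cas_pow' p N j ζ hjp hζ]
end

section
/- A prime-field-valued signal is completely determined by the FFFT coefficients indexed by one representative of each p-cyclotomic coset (so only the coset leaders need to be transmitted): assume F has characteristic p (p prime) and that (N : F) is invertible in F. Let S ⊆ ZMod N be a set meeting every orbit of the multiplication-by-p action on ZMod N (i.e., for every k ∈ ZMod N there exist s ∈ S and n ∈ ℕ with s = p^n·k in ZMod N). If v, w : ZMod N → F satisfy v_i^p = v_i and w_i^p = w_i for all i, and their FFFTs agree on S, then v = w. -/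
section aux

variable {F : Type*} [Field F] {N : ℕ} [NeZero N]

set_option linter.unusedSectionVars false

private lemma aux_pow_mod {ζ : F} (hζ : orderOf ζ = N) (x : ℕ) :
    ζ ^ (x % N) = ζ ^ x := by
  conv_rhs => rw [← pow_mod_orderOf]
  rw [hζ]

private lemma aux_pow_val_mul {ζ : F} (hζ : orderOf ζ = N) (a b : ZMod N) :
    ζ ^ (a * b).val = ζ ^ (a.val * b.val) := by
  rw [ZMod.val_mul, aux_pow_mod hζ]

private lemma aux_pow_val_add {ζ : F} (hζ : orderOf ζ = N) (a b : ZMod N) :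
    ζ ^ (a + b).val = ζ ^ a.val * ζ ^ b.val := by
  rw [ZMod.val_add, aux_pow_mod hζ, pow_add]

private lemma aux_sum_val (x : F) :
    ∑ k : ZMod N, x ^ k.val = ∑ j ∈ Finset.range N, x ^ j := by
  refine Finset.sum_bij (fun k _ => k.val) (fun k _ => Finset.mem_range.2 k.val_lt)
    (fun a _ b _ h => ZMod.val_injective N h)
    (fun j hj => ⟨(j : ZMod N), Finset.mem_univ _,
      ZMod.val_cast_of_lt (Finset.mem_range.1 hj)⟩) (fun _ _ => rfl)

/-- The character orthogonality sum. -/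
private lemma aux_char_sum {ζ : F} (hζ : orderOf ζ = N) {m : ZMod N} (hm : m ≠ 0) :
    ∑ k : ZMod N, ζ ^ (k * m).val = 0 := by
  have hx1 : ζ ^ m.val ≠ 1 := by
    intro h
    have hdvd : N ∣ m.val := by
      have := orderOf_dvd_of_pow_eq_one h
      rwa [hζ] at this
    have hv0 : m.val = 0 := Nat.eq_zero_of_dvd_of_lt hdvd m.val_lt
    exact hm ((ZMod.val_eq_zero m).1 hv0)
  have hsum : ∑ k : ZMod N, ζ ^ (k * m).val
      = ∑ j ∈ Finset.range N, (ζ ^ m.val) ^ j := by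
    rw [← aux_sum_val (ζ ^ m.val)]
    refine Finset.sum_congr rfl fun k _ => ?_
    rw [aux_pow_val_mul hζ, mul_comm, pow_mul]
  have hζN : ζ ^ N = 1 := by rw [← hζ]; exact pow_orderOf_eq_one ζ
  have hN : (ζ ^ m.val) ^ N = 1 := by
    rw [← pow_mul, mul_comm, pow_mul, hζN, one_pow]
  rw [hsum, geom_sum_eq hx1, hN, sub_self, zero_div]

end aux

/-- A prime-field-valued signal is completely determined by the FFFT coefficients
indexed by one representative of each `p`-cyclotomic coset: if the FFFTs of two
prime-field-valued signals agree on a set `S` meeting every orbit of the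
multiplication-by-`p` action on `ZMod N`, the signals are equal. -/
theorem ffft_determined_by_coset_leaders {F : Type*} [Field F] (p N : ℕ)
    [Fact p.Prime] [CharP F p] [NeZero N]
    (ζ : F) (hζ : orderOf ζ = N) (hNunit : IsUnit (N : F))
    (S : Set (ZMod N))
    (hS : ∀ k : ZMod N, ∃ s ∈ S, ∃ n : ℕ, s = (p : ZMod N) ^ n * k)
    (v w : ZMod N → F)
    (hv : ∀ i : ZMod N, v i ^ p = v i)
    (hw : ∀ i : ZMod N, w i ^ p = w i)
    (hagree : ∀ s ∈ S, ∑ i : ZMod N, v i * ζ ^ (s * i).val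
      = ∑ i : ZMod N, w i * ζ ^ (s * i).val) :
    v = w := by
  -- Step 1: the Frobenius acts on transform values
  have frob : ∀ (u : ZMod N → F), (∀ i, u i ^ p = u i) → ∀ k : ZMod N,
      (∑ i : ZMod N, u i * ζ ^ (k * i).val) ^ p
        = ∑ i : ZMod N, u i * ζ ^ (((p : ZMod N) * k) * i).val := by
    intro u hu k
    have hfs := map_sum (frobenius F p) (fun i => u i * ζ ^ (k * i).val) Finset.univ
    simp only [frobenius_def] at hfs
    rw [hfs]
    refine Finset.sum_congr rfl fun i _ => ?_
    rw [mul_pow, hu i]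
    congr 1
    have h1 : ζ ^ (p % N) = ζ ^ p := by rw [← hζ, pow_mod_orderOf]
    calc (ζ ^ (k * i).val) ^ p = (ζ ^ p) ^ (k * i).val := by
          rw [← pow_mul, ← pow_mul, mul_comm]
      _ = (ζ ^ (p % N)) ^ (k * i).val := by rw [h1]
      _ = ζ ^ ((p : ZMod N).val * (k * i).val) := by rw [← pow_mul, ZMod.val_natCast]
      _ = ζ ^ (((p : ZMod N) * (k * i)).val) := (aux_pow_val_mul hζ _ _).symm
      _ = ζ ^ ((((p : ZMod N) * k) * i).val) := by rw [mul_assoc]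
  -- Step 2: iterate the Frobenius
  have frobn : ∀ (u : ZMod N → F), (∀ i, u i ^ p = u i) → ∀ (n : ℕ) (k : ZMod N),
      (∑ i : ZMod N, u i * ζ ^ (k * i).val) ^ (p ^ n)
        = ∑ i : ZMod N, u i * ζ ^ ((((p : ZMod N)) ^ n * k) * i).val := by
    intro u hu n
    induction n with
    | zero => intro k; simp
    | succ n ih =>
      intro k
      have : ((p : ZMod N)) ^ (n + 1) * k = (p : ZMod N) * (((p : ZMod N)) ^ n * k) := by
        ring
      rw [this, ← frob u hu, ← ih k, ← pow_mul, pow_succ]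
  -- Step 3: all transform values agree
  have Veq : ∀ k : ZMod N, ∑ i : ZMod N, v i * ζ ^ (k * i).val
      = ∑ i : ZMod N, w i * ζ ^ (k * i).val := by
    intro k
    obtain ⟨s, hsS, n, hs⟩ := hS k
    have h := hagree s hsS
    rw [hs] at h
    rw [← frobn v hv n k, ← frobn w hw n k] at h
    have := iterateFrobenius_inj F p n
    apply this
    rwa [iterateFrobenius_def, iterateFrobenius_def]
  -- Step 4: Fourier inversion
  funext j
  have hzero : ∀ k : ZMod N, ∑ i : ZMod N, (v i - w i) * ζ ^ (k * i).val = 0 := by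
    intro k
    have : ∑ i : ZMod N, (v i - w i) * ζ ^ (k * i).val
        = (∑ i : ZMod N, v i * ζ ^ (k * i).val)
          - ∑ i : ZMod N, w i * ζ ^ (k * i).val := by
      rw [← Finset.sum_sub_distrib]
      exact Finset.sum_congr rfl fun i _ => by ring
    rw [this, Veq k, sub_self]
  have expand : ∑ k : ZMod N, (∑ i : ZMod N, (v i - w i) * ζ ^ (k * i).val)
        * ζ ^ (k * (-j)).val
      = ∑ i : ZMod N, (v i - w i) * ∑ k : ZMod N, ζ ^ (k * (i - j)).val := by
    simp_rw [Finset.sum_mul, mul_assoc, ← aux_pow_val_add hζ]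
    rw [Finset.sum_comm]
    refine Finset.sum_congr rfl fun i _ => ?_
    rw [← Finset.mul_sum]
    congr 1
    refine Finset.sum_congr rfl fun k _ => ?_
    congr 2
    ring
  have hL : ∑ k : ZMod N, (∑ i : ZMod N, (v i - w i) * ζ ^ (k * i).val)
      * ζ ^ (k * (-j)).val = 0 :=
    Finset.sum_eq_zero fun k _ => by rw [hzero k, zero_mul]
  have hR : ∑ i : ZMod N, (v i - w i) * ∑ k : ZMod N, ζ ^ (k * (i - j)).val
      = (v j - w j) * N := by
    rw [Finset.sum_eq_single_of_mem j (Finset.mem_univ j)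
      (fun i _ hij => by rw [aux_char_sum hζ (sub_ne_zero.2 hij), mul_zero])]
    congr 1
    simp [Finset.card_univ]
  rw [expand, hR] at hL
  have h0 : v j - w j = 0 := by
    rcases hNunit.exists_right_inv with ⟨b, hb⟩
    calc v j - w j = (v j - w j) * ((N : F) * b) := by rw [hb, mul_one]
      _ = ((v j - w j) * (N : F)) * b := by ring
      _ = 0 := by rw [hL, zero_mul]
  exact sub_eq_zero.1 h0
end

section
/- Converse Frobenius characterization of spectra of prime-field-valued signals: assume F has characteristic p (p prime) and that (N : F) is invertible in F, and let V : ZMod N → F satisfy V_{p·k} = (V_k)^p for all k ∈ ZMod N. Then the inverse FFFT v given by v_i = (N : F)⁻¹ · Σ_{k ∈ ZMod N} V_k · ζ^{−ki} satisfies v_i^p = v_i for all i (i.e., v takes values in the prime field GF(p)). -/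
/-- Converse Frobenius characterization of spectra of prime-field-valued signals:
in characteristic `p`, if `V (p·k) = (V k)^p` for all `k` and `v` is the inverse
FFFT of `V`, then `v` takes values in the prime field (`v i ^ p = v i`). -/
theorem ffft_converse_frobenius {F : Type*} [Field F] (p N : ℕ) [Fact p.Prime]
    [CharP F p] [NeZero N]
    (ζ : F) (hζ : orderOf ζ = N) (hNunit : IsUnit (N : F))
    (V v : ZMod N → F)
    (hV : ∀ k : ZMod N, V ((p : ZMod N) * k) = (V k) ^ p)
    (hv : ∀ i : ZMod N, v i = (N : F)⁻¹ * ∑ k : ZMod N, V k * ζ ^ (-(k * i)).val)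
    (i : ZMod N) :
    v i ^ p = v i := by
  have hp : p.Prime := Fact.out
  have hpN : ¬ p ∣ N := by
    intro h
    rcases h with ⟨c, rfl⟩
    have : ((p * c : ℕ) : F) = 0 := by
      push_cast
      simp [CharP.cast_eq_zero F p]
    exact not_isUnit_zero (this ▸ hNunit)
  have hco : Nat.Coprime p N := (hp.coprime_iff_not_dvd).mpr hpN
  have hu : IsUnit (p : ZMod N) := (ZMod.isUnit_iff_coprime p N).mpr hco
  have hNF : (N : F) ^ p = (N : F) := by
    have h1 : (N : ZMod p) ^ p = (N : ZMod p) := ZMod.pow_card _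
    have h2 : N ^ p ≡ N [MOD p] := by
      have := (ZMod.natCast_eq_natCast_iff (N ^ p) N p).mp (by push_cast; exact h1)
      exact this
    calc (N : F) ^ p = ((N ^ p : ℕ) : F) := by push_cast; ring
      _ = (N : F) := (CharP.natCast_eq_natCast F p).mpr h2
  have hzN : ζ ^ N = 1 := by rw [← hζ]; exact pow_orderOf_eq_one ζ
  have hz : ∀ a : ZMod N, ζ ^ (a.val * p) = ζ ^ (((p : ZMod N) * a).val) := by
    intro a
    have hcast : ((a.val * p : ℕ) : ZMod N) = ((((p : ZMod N) * a).val : ℕ) : ZMod N) := by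
      simp [ZMod.natCast_val, ZMod.cast_id]
      ring
    have hmod : (a.val * p) % N = (((p : ZMod N) * a).val) % N :=
      (ZMod.natCast_eq_natCast_iff _ _ _).mp hcast
    rw [pow_eq_pow_mod _ hzN, pow_eq_pow_mod (((p : ZMod N) * a).val) hzN, hmod]
  rw [hv i, mul_pow, sum_pow_char, inv_pow, hNF]
  congr 1
  calc ∑ k : ZMod N, (V k * ζ ^ (-(k * i)).val) ^ p
      = ∑ k : ZMod N, V ((p : ZMod N) * k) * ζ ^ (-(((p : ZMod N) * k) * i)).val := by
        refine Finset.sum_congr rfl fun k _ => ?_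
        rw [mul_pow, ← hV, ← pow_mul, hz]
        have : (p : ZMod N) * -(k * i) = -((p : ZMod N) * k * i) := by ring
        rw [this]
    _ = ∑ k : ZMod N, V k * ζ ^ (-(k * i)).val := by
        exact Fintype.sum_bijective (fun k => (p : ZMod N) * k)
          (hu.unit.mulLeft_bijective) _ _ (fun k => rfl)
end

section
/- The number of p-cyclotomic cosets equals the number of irreducible factors of X^N − 1: let p be a prime and N ≥ 1 with p not dividing N. Then the number of distinct monic irreducible factors of X^N − 1 in (ZMod p)[X] equals the number of orbits of the multiplication-by-p action on ZMod N. -/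
open Polynomial

lemma ncard_range_eq_of_iff {α β γ : Type*} (f : α → β) (g : α → γ)
    (h : ∀ a b, f a = f b ↔ g a = g b) :
    (Set.range f).ncard = (Set.range g).ncard := by
  rw [← Nat.card_coe_set_eq, ← Nat.card_coe_set_eq]
  refine Nat.card_eq_of_bijective (fun x => ⟨g x.2.choose, x.2.choose, rfl⟩) ⟨?_, ?_⟩
  · rintro ⟨x, hx⟩ ⟨y, hy⟩ hxy
    simp only [Subtype.mk.injEq, Subtype.ext_iff] at hxy ⊢
    rw [← hx.choose_spec, ← hy.choose_spec]
    exact (h _ _).mpr hxy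
  · rintro ⟨y, a, rfl⟩
    refine ⟨⟨f a, a, rfl⟩, ?_⟩
    simp only [Subtype.mk.injEq, Subtype.ext_iff]
    exact (h _ _).mp (⟨a, rfl⟩ : ∃ y, f y = f a).choose_spec

/-- The number of `p`-cyclotomic cosets equals the number of distinct monic
irreducible factors of `X^N - 1` over `GF(p)`. -/
theorem irreducible_factors_eq_coset_count (p N : ℕ) (hp : p.Prime) (hN : 1 ≤ N)
    (hpN : ¬ p ∣ N) :
    {f : Polynomial (ZMod p) | f.Monic ∧ Irreducible f ∧ f ∣ (X ^ N - 1)}.ncard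
      = {O : Set (ZMod N) | ∃ k : ZMod N,
          O = {x : ZMod N | ∃ n : ℕ, x = (p : ZMod N) ^ n * k}}.ncard := by
  haveI : Fact p.Prime := ⟨hp⟩
  haveI : NeZero N := ⟨by omega⟩
  have hcop : Nat.Coprime p N := hp.coprime_iff_not_dvd.mpr hpN
  set u : (ZMod N)ˣ := ZMod.unitOfCoprime p hcop with hu
  set d := orderOf u with hd
  have hd0 : d ≠ 0 := by have : 0 < d := orderOf_pos u; omega
  have hpd : ((p : ZMod N)) ^ d = 1 := by
    have h1 := pow_orderOf_eq_one u
    have : ((u ^ d : (ZMod N)ˣ) : ZMod N) = 1 := by rw [h1]; rfl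
    simpa [hu, ZMod.coe_unitOfCoprime] using this
  have hple : 1 ≤ p ^ d := Nat.one_le_pow _ _ hp.pos
  have hNdvd : N ∣ p ^ d - 1 := by
    have : ((p ^ d - 1 : ℕ) : ZMod N) = 0 := by
      rw [Nat.cast_sub hple, Nat.cast_pow, hpd]; ring
    exact (ZMod.natCast_eq_zero_iff _ _).mp this
  -- the splitting field
  haveI : Fintype (GaloisField p d) := Fintype.ofFinite _
  haveI : DecidableEq (GaloisField p d) := Classical.decEq _
  have h2 : 2 ≤ p ^ d := Nat.one_lt_pow hd0 hp.one_lt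
  have hcardF' : Fintype.card (GaloisField p d) = p ^ d := by
    rw [← Nat.card_eq_fintype_card, GaloisField.card p d hd0]
  -- primitive N-th root of unity
  obtain ⟨g, hg⟩ := IsCyclic.exists_ofOrder_eq_natCard (α := (GaloisField p d)ˣ)
  have hcardu : Nat.card (GaloisField p d)ˣ = p ^ d - 1 := by
    rw [Nat.card_eq_fintype_card, Fintype.card_units, hcardF']
  have hgprim : IsPrimitiveRoot g (p ^ d - 1) := by
    rw [← hcardu, ← hg]; exact IsPrimitiveRoot.orderOf g
  obtain ⟨m, hm⟩ := hNdvd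
  have hζu : IsPrimitiveRoot (g ^ m) N := hgprim.pow (by omega) (by rw [hm, mul_comm])
  set ζ : GaloisField p d := ((g ^ m : (GaloisField p d)ˣ) : GaloisField p d) with hζdef
  have hζ : IsPrimitiveRoot ζ N := IsPrimitiveRoot.coe_units_iff.mpr hζu
  have hζN : ζ ^ N = 1 := hζ.pow_eq_one
  -- the Frobenius as an algebra equivalence
  have hfrobbij : Function.Bijective (frobenius (GaloisField p d) p) :=
    (Finite.injective_iff_bijective).mp (frobenius (GaloisField p d) p).injective
  set φ : (GaloisField p d) ≃ₐ[ZMod p] (GaloisField p d) :=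
    { RingEquiv.ofBijective (frobenius (GaloisField p d) p) hfrobbij with
      commutes' := fun c => by
        show (algebraMap (ZMod p) (GaloisField p d) c) ^ p = algebraMap _ _ c
        rw [← map_pow, ZMod.pow_card] } with hφdef
  have hφapp : ∀ x : GaloisField p d, φ x = x ^ p := fun x => rfl
  have hφpow : ∀ (n : ℕ) (x : GaloisField p d), (φ ^ n) x = x ^ p ^ n := by
    intro n
    induction n with
    | zero => intro x; simp
    | succ n ih =>
      intro x
      rw [pow_succ, AlgEquiv.mul_apply, hφapp, ih, ← pow_mul, ← pow_succ']
  have hφd : φ ^ d = 1 := by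
    ext x
    rw [hφpow, ← hcardF', FiniteField.pow_card]
    rfl
  have hordle : orderOf φ ∣ d := orderOf_dvd_of_pow_eq_one hφd
  have horder : orderOf φ = d := by
    set e := orderOf φ with he
    have he0 : 0 < e := by
      refine orderOf_pos_iff.mpr ?_
      exact isOfFinOrder_iff_pow_eq_one.mpr ⟨d, by omega, hφd⟩
    have hroots : ∀ x : GaloisField p d, x ^ p ^ e - x = 0 := by
      intro x
      have : (φ ^ e) x = x := by rw [pow_orderOf_eq_one φ]; rfl
      rw [hφpow] at this
      rw [this, sub_self]
    have hpe1 : 1 < p ^ e := Nat.one_lt_pow he0.ne' hp.one_lt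
    have hdeg : (X ^ p ^ e - X : (GaloisField p d)[X]).natDegree = p ^ e :=
      FiniteField.X_pow_card_sub_X_natDegree_eq _ hpe1
    have hne : (X ^ p ^ e - X : (GaloisField p d)[X]) ≠ 0 :=
      FiniteField.X_pow_card_sub_X_ne_zero _ hpe1
    have hsub : (Finset.univ : Finset (GaloisField p d)) ⊆
        (X ^ p ^ e - X : (GaloisField p d)[X]).roots.toFinset := by
      intro x _
      rw [Multiset.mem_toFinset, mem_roots hne]
      simpa using hroots x
    have hcard : Fintype.card (GaloisField p d) ≤ p ^ e := by
      calc Fintype.card (GaloisField p d) = (Finset.univ : Finset (GaloisField p d)).card := rfl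
        _ ≤ _ := Finset.card_le_card hsub
        _ ≤ Multiset.card (X ^ p ^ e - X : (GaloisField p d)[X]).roots :=
            Multiset.toFinset_card_le _
        _ ≤ (X ^ p ^ e - X : (GaloisField p d)[X]).natDegree := card_roots' _
        _ = p ^ e := hdeg
    rw [hcardF'] at hcard
    have hle : d ≤ e := (Nat.pow_le_pow_iff_right hp.one_lt).mp hcard
    have hed : e ≤ d := Nat.le_of_dvd (by omega) hordle
    omega
  -- every automorphism is a power of Frobenius
  have hgen : ∀ σ : (GaloisField p d) ≃ₐ[ZMod p] (GaloisField p d), ∃ n : ℕ, φ ^ n = σ := by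
    have hcardG : Nat.card (GaloisField p d ≃ₐ[ZMod p] GaloisField p d) = d := by
      rw [IsGalois.card_aut_eq_finrank, GaloisField.finrank p hd0]
    have htop : Subgroup.zpowers φ = ⊤ := by
      apply Subgroup.eq_top_of_card_eq
      rw [Nat.card_zpowers, horder, hcardG]
    intro σ
    have : σ ∈ Subgroup.zpowers φ := htop ▸ Subgroup.mem_top σ
    obtain ⟨n, hn⟩ := (mem_powers_iff_mem_zpowers).mpr this
    exact ⟨n, hn⟩
  -- same minimal polynomial iff Frobenius-conjugate
  have key : ∀ a b : GaloisField p d,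
      minpoly (ZMod p) a = minpoly (ZMod p) b ↔ ∃ n : ℕ, a = b ^ p ^ n := by
    intro a b
    rw [Normal.minpoly_eq_iff_mem_orbit]
    constructor
    · rintro ⟨σ, rfl⟩
      obtain ⟨n, rfl⟩ := hgen σ
      exact ⟨n, (hφpow n b).symm ▸ rfl⟩
    · rintro ⟨n, rfl⟩
      exact ⟨φ ^ n, (hφpow n b)⟩
  -- the two indexings
  set Φ : ZMod N → Polynomial (ZMod p) := fun k => minpoly (ZMod p) (ζ ^ k.val) with hΦ
  set Ψ : ZMod N → Set (ZMod N) :=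
    fun k => {x : ZMod N | ∃ n : ℕ, x = (p : ZMod N) ^ n * k} with hΨ
  -- power relation on ζ translated to ZMod N
  have hordu : orderOf (g ^ m) = N := hζu.eq_orderOf.symm
  have hvala : ∀ s t : ℕ, ζ ^ s = ζ ^ t ↔ s ≡ t [MOD N] := by
    intro s t
    rw [hζdef, ← Units.val_pow_eq_pow_val, ← Units.val_pow_eq_pow_val]
    rw [← Units.ext_iff, pow_eq_pow_iff_modEq, hordu]
  have hζpow : ∀ a b : ZMod N, (∃ n : ℕ, ζ ^ a.val = (ζ ^ b.val) ^ p ^ n)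
      ↔ ∃ n : ℕ, a = (p : ZMod N) ^ n * b := by
    intro a b
    constructor
    · rintro ⟨n, hn⟩
      refine ⟨n, ?_⟩
      rw [← pow_mul] at hn
      have hmod := (hvala _ _).mp hn
      have hcast := (ZMod.natCast_eq_natCast_iff _ _ _).mpr hmod
      push_cast at hcast
      rw [ZMod.natCast_val, ZMod.natCast_val, ZMod.cast_id, ZMod.cast_id] at hcast
      rw [hcast]; ring
    · rintro ⟨n, hn⟩
      refine ⟨n, ?_⟩
      rw [← pow_mul]
      rw [hvala, ← ZMod.natCast_eq_natCast_iff]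
      push_cast
      rw [ZMod.natCast_val, ZMod.natCast_val, ZMod.cast_id, ZMod.cast_id, hn]
      ring
  -- the orbit sets
  have hΨiff : ∀ a b : ZMod N, Ψ a = Ψ b ↔ ∃ n : ℕ, a = (p : ZMod N) ^ n * b := by
    intro a b
    constructor
    · intro h
      have : a ∈ Ψ a := ⟨0, by simp⟩
      rw [h] at this
      exact this
    · rintro ⟨n, hn⟩
      ext x
      simp only [hΨ, Set.mem_setOf_eq]
      constructor
      · rintro ⟨k, rfl⟩
        exact ⟨k + n, by rw [hn, ← mul_assoc, ← pow_add]⟩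
      · rintro ⟨k, rfl⟩
        refine ⟨k + n * (d - 1), ?_⟩
        rw [hn, ← mul_assoc, ← pow_add]
        have hd1 : d - 1 + 1 = d := by omega
        have hnd : n * (d - 1) + n = d * n := by
          rw [← Nat.mul_succ, Nat.succ_eq_add_one, hd1, Nat.mul_comm]
        have he : k + n * (d - 1) + n = k + d * n := by omega
        rw [he, pow_add, pow_mul, hpd, one_pow, mul_one]
  have hΦiff : ∀ a b : ZMod N, Φ a = Φ b ↔ Ψ a = Ψ b := by
    intro a b
    rw [hΨiff, hΦ]
    simp only
    rw [key, hζpow]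
  -- identify the sets with ranges
  have hLHS : {f : Polynomial (ZMod p) | f.Monic ∧ Irreducible f ∧ f ∣ (X ^ N - 1)}
      = Set.range Φ := by
    ext f
    simp only [Set.mem_setOf_eq, Set.mem_range]
    constructor
    · rintro ⟨hmon, hirr, hdvd⟩
      -- X^N - 1 splits over GaloisField p d
      have hsplits : ((X ^ N - 1 : (ZMod p)[X]).map (algebraMap (ZMod p) (GaloisField p d))).Splits := by
        rw [Polynomial.map_sub, Polynomial.map_pow, map_X,
          Polynomial.map_one, X_pow_sub_one_eq_prod (by omega) hζ]
        exact Splits.prod (fun ζ' _ => Splits.X_sub_C _)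
      have hXN : (X ^ N - 1 : (ZMod p)[X]) ≠ 0 := by
        intro h
        have := congrArg (eval 0) h
        simp [zero_pow (by omega : N ≠ 0)] at this
      have hfsplits : (f.map (algebraMap (ZMod p) (GaloisField p d))).Splits :=
        Splits.of_dvd hsplits (Polynomial.map_ne_zero hXN) (Polynomial.map_dvd _ hdvd)
      obtain ⟨α, hα⟩ := Splits.exists_eval_eq_zero hfsplits
        (by rw [degree_map]; exact (degree_pos_of_irreducible hirr).ne')
      have hαroot : aeval α f = 0 := by rwa [aeval_def, eval₂_eq_eval_map]
      have hαN : α ^ N = 1 := by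
        obtain ⟨q, hq⟩ := hdvd
        have : aeval α (X ^ N - 1 : (ZMod p)[X]) = 0 := by
          rw [hq, map_mul, hαroot, zero_mul]
        simpa [sub_eq_zero] using this
      obtain ⟨i, hiN, hi⟩ := hζ.eq_pow_of_pow_eq_one hαN
      refine ⟨(i : ZMod N), ?_⟩
      rw [hΦ]
      simp only
      rw [ZMod.val_cast_of_lt hiN, hi]
      exact (minpoly.eq_of_irreducible_of_monic hirr hαroot hmon).symm
    · rintro ⟨k, rfl⟩
      have hint : IsIntegral (ZMod p) (ζ ^ k.val) := IsIntegral.of_finite _ _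
      refine ⟨minpoly.monic hint, minpoly.irreducible hint, minpoly.dvd _ _ ?_⟩
      rw [map_sub, map_pow, aeval_X, map_one, ← pow_mul, mul_comm, pow_mul, hζN,
        one_pow, sub_self]
  have hRHS : {O : Set (ZMod N) | ∃ k : ZMod N,
      O = {x : ZMod N | ∃ n : ℕ, x = (p : ZMod N) ^ n * k}} = Set.range Ψ := by
    ext O
    simp only [Set.mem_setOf_eq, Set.mem_range, hΨ]
    exact ⟨fun ⟨k, hk⟩ => ⟨k, hk.symm⟩, fun ⟨k, hk⟩ => ⟨k, hk.symm⟩⟩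
  rw [hLHS, hRHS]
  exact ncard_range_eq_of_iff Φ Ψ hΦiff
end
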